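/- Let F be a locally free sheaf on P^n (n ≥ 2), H a hyperplane, and suppose that for every i ≥ 1 the exact sequence 0 → F_{H_{i-1}}(-1) →(h) F_{H_i} → F_H → 0 splits as O_H-modules. Then for every p ≥ 0, i ≥ 0 and a ∈ ℤ the restriction map H^p(F_{H_i}(a)) → H^p(F_H(a)) is surjective. -/
import Mathlib

open CategoryTheory

theorem stmt_14 (k : Type) [Field k] (n : ℕ) (hn : 2 ≤ n)
    (Sheaf : Type)                                   -- coherent sheaves on Pⁿ_k
    (LocallyFree : Sheaf → Prop)
    (C : Type) [Category C] [Abelian C]              -- coherent O_H-modules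
    (restrictHi : Sheaf → ℕ → C)                     -- F_{H_i}
    (twist : C → ℤ → C)                              -- X ↦ X(a)
    (coh : ℕ → ℤ → C ⥤ ModuleCat k)                  -- X ↦ H^p(H, X(a))
    (F : Sheaf) (hF : LocallyFree F)
    (hmul : ∀ i : ℕ, twist (restrictHi F i) (-1) ⟶ restrictHi F (i + 1))
       -- multiplication by h
    (res : ∀ i : ℕ, restrictHi F i ⟶ restrictHi F 0)   -- restriction F_{H_i} → F_H
    (hres0 : res 0 = 𝟙 (restrictHi F 0))
    (w : ∀ i : ℕ, hmul i ≫ res (i + 1) = 0)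
    (hexact : ∀ i : ℕ, (ShortComplex.mk (hmul i) (res (i + 1)) (w i)).ShortExact)
    (hsplit : ∀ i : ℕ, Nonempty (ShortComplex.mk (hmul i) (res (i + 1)) (w i)).Splitting) :
    ∀ (p i : ℕ) (a : ℤ), Function.Surjective ⇑((coh p a).map (res i)) := by
  intro p i a
  cases i with
  | zero =>
      rw [hres0, CategoryTheory.Functor.map_id]
      exact Function.surjective_id
  | succ i =>
      obtain ⟨σ⟩ := hsplit i
      intro y
      refine ⟨(coh p a).map σ.s y, ?_⟩
      have : (coh p a).map σ.s ≫ (coh p a).map (res (i + 1)) = 𝟙 _ := by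
        rw [← Functor.map_comp, σ.s_g, CategoryTheory.Functor.map_id]
      calc ((coh p a).map (res (i+1))) (((coh p a).map σ.s) y)
          = ((coh p a).map σ.s ≫ (coh p a).map (res (i+1))) y := rfl
        _ = y := by rw [this]; rfl
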